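/- arXiv:1805.10048 — 4 statements merged into one kernel-verified Lean document; each statement's English description precedes it below -/
import Mathlib

section
/- Let T be a bounded linear operator on a separable Banach space B. Suppose there exist dense subsets Y1, Y2 of B and a (not necessarily linear or continuous) map S : Y1 → Y1 such that (i) Tⁿy → 0 as n → ∞ for every y ∈ Y2, (ii) Sⁿx → 0 as n → ∞ for every x ∈ Y1, and (iii) T(Sx) = x for every x ∈ Y1. Then T is hypercyclic, i.e., there exists x ∈ B whose orbit {Tⁿx : n ∈ ℕ} is dense in B. -/
open Filter Topology

/-- Kitai's criterion: if `T` admits dense sets `Y₁, Y₂` and a right inverse `S` on `Y₁`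
with the stated convergence properties, then `T` is hypercyclic. -/
theorem kitai_criterion
    {B : Type*} [NormedAddCommGroup B] [NormedSpace ℂ B] [CompleteSpace B]
    [TopologicalSpace.SeparableSpace B]
    (T : B →L[ℂ] B) (Y₁ Y₂ : Set B) (hY₁ : Dense Y₁) (hY₂ : Dense Y₂)
    (S : B → B) (hS : ∀ x ∈ Y₁, S x ∈ Y₁)
    (h1 : ∀ y ∈ Y₂, Tendsto (fun n : ℕ => (T ^ n) y) atTop (𝓝 0))
    (h2 : ∀ x ∈ Y₁, Tendsto (fun n : ℕ => S^[n] x) atTop (𝓝 0))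
    (h3 : ∀ x ∈ Y₁, T (S x) = x) :
    ∃ x : B, Dense (Set.range fun n : ℕ => (T ^ n) x) := by
  -- The "transitivity" sets
  set G : Set B → Set B := fun U => {x : B | ∃ n : ℕ, (T ^ n) x ∈ U} with hG
  have hGopen : ∀ U : Set B, IsOpen U → IsOpen (G U) := by
    intro U hU
    have : G U = ⋃ n : ℕ, (T ^ n) ⁻¹' U := by
      ext x; simp [hG, Set.mem_iUnion]
    rw [this]
    exact isOpen_iUnion fun n => hU.preimage (T ^ n).continuous
  -- key: each G U is dense for U open nonempty
  have hGdense : ∀ U : Set B, IsOpen U → U.Nonempty → Dense (G U) := by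
    intro U hU hUne
    rw [dense_iff_inter_open]
    intro W hW hWne
    obtain ⟨y, hyW, hyY₂⟩ := hY₂.inter_open_nonempty W hW hWne
    obtain ⟨z, hzU, hzY₁⟩ := hY₁.inter_open_nonempty U hU hUne
    -- S^[n] z stays in Y₁ and T^n S^[n] z = z
    have hiter : ∀ n : ℕ, S^[n] z ∈ Y₁ ∧ (T ^ n) (S^[n] z) = z := by
      intro n
      induction n with
      | zero => simpa using hzY₁
      | succ n ih =>
        constructor
        · rw [Function.iterate_succ_apply']
          exact hS _ ih.1
        · rw [Function.iterate_succ_apply', pow_succ]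
          simp only [ContinuousLinearMap.mul_apply]
          rw [h3 _ ih.1, ih.2]
    -- candidate points
    have hA : Tendsto (fun n : ℕ => y + S^[n] z) atTop (𝓝 y) := by
      have := (tendsto_const_nhds (x := y) (f := atTop)).add (h2 z hzY₁)
      simpa using this
    have hB : Tendsto (fun n : ℕ => (T ^ n) (y + S^[n] z)) atTop (𝓝 z) := by
      have heq : (fun n : ℕ => (T ^ n) (y + S^[n] z))
          = fun n : ℕ => (T ^ n) y + z := by
        funext n
        rw [map_add, (hiter n).2]
      rw [heq]
      have := (h1 y hyY₂).add (tendsto_const_nhds (x := z) (f := atTop))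
      simpa using this
    have e1 : ∀ᶠ n in atTop, y + S^[n] z ∈ W :=
      hA.eventually_mem (hW.mem_nhds hyW)
    have e2 : ∀ᶠ n in atTop, (T ^ n) (y + S^[n] z) ∈ U :=
      hB.eventually_mem (hU.mem_nhds hzU)
    obtain ⟨n, hn1, hn2⟩ := (e1.and e2).exists
    exact ⟨y + S^[n] z, hn1, n, hn2⟩
  -- countable basis and Baire
  obtain ⟨b, hbc, -, hbb⟩ := TopologicalSpace.exists_countable_basis B
  have hdense : Dense (⋂ U ∈ {U ∈ b | U.Nonempty}, G U) := by
    refine dense_biInter_of_isOpen ?_ (hbc.mono (Set.sep_subset _ _)) ?_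
    · exact fun U hU => hGopen U (hbb.isOpen hU.1)
    · exact fun U hU => hGdense U (hbb.isOpen hU.1) hU.2
  obtain ⟨x, hx⟩ := hdense.nonempty
  refine ⟨x, dense_iff_inter_open.2 fun V hV hVne => ?_⟩
  obtain ⟨v, hv⟩ := hVne
  obtain ⟨U, hUb, hvU, hUV⟩ := hbb.exists_subset_of_mem_open hv hV
  have hxU : x ∈ G U := by
    have := Set.mem_iInter₂.1 hx U ⟨hUb, ⟨v, hvU⟩⟩
    exact this
  obtain ⟨n, hn⟩ := hxU
  exact ⟨(T ^ n) x, hUV hn, ⟨n, rfl⟩⟩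
end

section
/- Let T be a hypercyclic bounded linear operator on a Banach space B and let T* : B* → B* be its adjoint. Then the point spectrum of T* is empty, i.e., T* has no eigenvalues. -/
open NormedSpace

/-- If `T` is hypercyclic on a Banach space, then the adjoint `T*` (acting on the dual by
`φ ↦ φ ∘ T`) has empty point spectrum. -/
theorem adjoint_of_hypercyclic_no_eigenvalues
    {B : Type*} [NormedAddCommGroup B] [NormedSpace ℂ B] [CompleteSpace B]
    (T : B →L[ℂ] B)
    (hT : ∃ x : B, Dense (Set.range fun n : ℕ => (T ^ n) x)) :
    ¬ ∃ (c : ℂ) (φ : StrongDual ℂ B), φ ≠ 0 ∧ φ.comp T = c • φ := by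
  rintro ⟨c, φ, hφ0, hφT⟩
  obtain ⟨x, hx⟩ := hT
  have hstep : ∀ z, φ (T z) = c * φ z := by
    intro z
    have := DFunLike.congr_fun hφT z
    simpa using this
  have hpow : ∀ (n : ℕ) (z : B), φ ((T ^ n) z) = c ^ n * φ z := by
    intro n
    induction n with
    | zero => intro z; simp
    | succ n ih =>
      intro z
      rw [pow_succ, ContinuousLinearMap.mul_apply, ih, hstep, pow_succ]
      ring
  obtain ⟨u, hu⟩ : ∃ u, φ u ≠ 0 := by
    by_contra h
    push_neg at h
    exact hφ0 (ContinuousLinearMap.ext fun z => by simp [h z])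
  have key : ∀ (w : ℂ) (ε : ℝ), 0 < ε → ∃ n : ℕ, ‖c ^ n * φ x - w‖ < ε := by
    intro w ε hε
    set y := (w / φ u) • u with hy
    have hφy : φ y = w := by
      simp [hy, div_mul_cancel₀, hu]
    have hε' : (0:ℝ) < ε / (‖φ‖ + 1) := by positivity
    obtain ⟨_, ⟨n, rfl⟩, hd⟩ := hx.exists_dist_lt y hε'
    refine ⟨n, ?_⟩
    have h1 : c ^ n * φ x - w = φ ((T ^ n) x - y) := by
      rw [map_sub, hpow, hφy]
    rw [h1]
    have hd' : ‖(T ^ n) x - y‖ < ε / (‖φ‖ + 1) := by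
      rw [← dist_eq_norm, dist_comm]; exact hd
    have hφn : (0:ℝ) ≤ ‖φ‖ := norm_nonneg _
    have hzn : (0:ℝ) ≤ ‖(T ^ n) x - y‖ := norm_nonneg _
    have hmul : ‖(T ^ n) x - y‖ * (‖φ‖ + 1) < ε := by
      rw [← lt_div_iff₀ (by linarith)]; exact hd'
    calc ‖φ ((T ^ n) x - y)‖ ≤ ‖φ‖ * ‖(T ^ n) x - y‖ := φ.le_opNorm _
      _ < ε := by nlinarith
  rcases le_or_gt ‖c‖ 1 with hc | hc
  · obtain ⟨n, hn⟩ := key ((‖φ x‖ + 1 : ℝ) : ℂ) 1 one_pos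
    have h1 : ‖c ^ n * φ x‖ ≤ ‖φ x‖ := by
      rw [norm_mul, norm_pow]
      calc ‖c‖ ^ n * ‖φ x‖ ≤ 1 * ‖φ x‖ := by
            gcongr
            exact pow_le_one₀ (norm_nonneg _) hc
        _ = ‖φ x‖ := one_mul _
    have h2 : ‖((‖φ x‖ + 1 : ℝ) : ℂ)‖ = ‖φ x‖ + 1 := by
      rw [Complex.norm_real]; exact Real.norm_of_nonneg (by positivity)
    have h3 : ‖((‖φ x‖ + 1 : ℝ) : ℂ)‖ - ‖c ^ n * φ x‖ ≤ ‖c ^ n * φ x - ((‖φ x‖ + 1 : ℝ) : ℂ)‖ := by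
      rw [norm_sub_rev]; exact norm_sub_norm_le _ _
    rw [h2] at h3
    linarith
  · by_cases hx0 : φ x = 0
    · obtain ⟨n, hn⟩ := key 1 1 one_pos
      simp [hx0] at hn
    · have hφx : (0:ℝ) < ‖φ x‖ := norm_pos_iff.mpr hx0
      obtain ⟨n, hn⟩ := key (φ x / 2) (‖φ x‖ / 2) (by positivity)
      have h1 : ‖φ x‖ ≤ ‖c ^ n * φ x‖ := by
        rw [norm_mul, norm_pow]
        calc ‖φ x‖ = 1 * ‖φ x‖ := (one_mul _).symm
          _ ≤ ‖c‖ ^ n * ‖φ x‖ := by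
              gcongr
              exact one_le_pow₀ hc.le
      have h2 : ‖φ x / 2‖ = ‖φ x‖ / 2 := by
        rw [norm_div]; norm_num
      have h3 : ‖c ^ n * φ x‖ - ‖φ x / 2‖ ≤ ‖c ^ n * φ x - φ x / 2‖ :=
        norm_sub_norm_le _ _
      rw [h2] at h3
      linarith
end

section
/- Let T be a hypercyclic bounded linear operator on a Banach space B with adjoint T* on B*. Then for every nonzero functional φ ∈ B*, the orbit {(T*)ⁿφ : n ≥ 0} is unbounded in B*. -/
open NormedSpace

/-- If `T` is hypercyclic on a Banach space, then for every nonzero functional `φ` in the dual,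
the orbit of `φ` under the adjoint `T*` (given by `φ ↦ φ ∘ T`) is unbounded. -/
theorem adjoint_orbit_unbounded_of_hypercyclic
    {B : Type*} [NormedAddCommGroup B] [NormedSpace ℂ B] [CompleteSpace B]
    (T : B →L[ℂ] B)
    (hT : ∃ x : B, Dense (Set.range fun n : ℕ => (T ^ n) x))
    (φ : StrongDual ℂ B) (hφ : φ ≠ 0) :
    ¬ ∃ C : ℝ, ∀ n : ℕ, ‖(fun ψ : StrongDual ℂ B => ψ.comp T)^[n] φ‖ ≤ C := by
  rintro ⟨C, hC⟩
  obtain ⟨x₀, hx₀⟩ := hT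
  have hiter : ∀ n : ℕ, (fun ψ : StrongDual ℂ B => ψ.comp T)^[n] φ = φ.comp (T ^ n) := by
    intro n
    induction n with
    | zero => simp; rfl
    | succ n ih =>
        rw [Function.iterate_succ_apply', ih]
        ext x
        simp [pow_succ, ContinuousLinearMap.mul_apply]
  -- pointwise bound on the orbit of x₀
  have hbound : ∀ n : ℕ, ‖φ ((T ^ n) x₀)‖ ≤ C * ‖x₀‖ := by
    intro n
    have h1 : ‖(φ.comp (T ^ n)) x₀‖ ≤ ‖φ.comp (T ^ n)‖ * ‖x₀‖ :=
      (φ.comp (T ^ n)).le_opNorm x₀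
    have h2 : ‖φ.comp (T ^ n)‖ ≤ C := by rw [← hiter n]; exact hC n
    calc ‖φ ((T ^ n) x₀)‖ = ‖(φ.comp (T ^ n)) x₀‖ := rfl
      _ ≤ ‖φ.comp (T ^ n)‖ * ‖x₀‖ := h1
      _ ≤ C * ‖x₀‖ := by
          exact mul_le_mul_of_nonneg_right h2 (norm_nonneg _)
  -- the bound extends to all of B by density
  have hall : ∀ y : B, ‖φ y‖ ≤ C * ‖x₀‖ := by
    have hclosed : IsClosed {y : B | ‖φ y‖ ≤ C * ‖x₀‖} :=
      isClosed_le (by continuity) continuous_const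
    intro y
    have hy : y ∈ closure (Set.range fun n : ℕ => (T ^ n) x₀) := by
      rw [hx₀.closure_eq]; trivial
    have hsub : closure (Set.range fun n : ℕ => (T ^ n) x₀) ⊆
        {y : B | ‖φ y‖ ≤ C * ‖x₀‖} := by
      apply closure_minimal _ hclosed
      rintro _ ⟨n, rfl⟩
      exact hbound n
    exact hsub hy
  -- contradiction with φ ≠ 0
  obtain ⟨x, hx⟩ : ∃ x : B, φ x ≠ 0 := by
    by_contra h
    push_neg at h
    exact hφ (ContinuousLinearMap.ext fun x => by simpa using h x)
  have hnx : (0 : ℝ) < ‖φ x‖ := norm_pos_iff.mpr hx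
  set k : ℂ := (((C * ‖x₀‖ + 1) / ‖φ x‖ : ℝ) : ℂ)
  have := hall (k • x)
  rw [map_smul, norm_smul] at this
  have h0 : (0 : ℝ) ≤ C * ‖x₀‖ := le_trans (norm_nonneg _) (hall 0)
  have hnn : (0 : ℝ) ≤ (C * ‖x₀‖ + 1) / ‖φ x‖ := by positivity
  have hk : ‖k‖ = (C * ‖x₀‖ + 1) / ‖φ x‖ := by
    simp only [k, Complex.norm_real]; exact abs_of_nonneg hnn
  rw [hk, div_mul_cancel₀ _ (ne_of_gt hnx)] at this
  linarith
end

section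
/- Let Ω ⊆ ℂ be a connected open set, m : Ω → ℂ holomorphic and nonconstant. Let S = 𝕋 ∩ m(Ω) where 𝕋 is the unit circle, and suppose S is nonempty. For r ∈ ℝ with e^{2πir} ∈ S, let Z_r = {z ∈ Ω : m(z) = e^{2πir}}. Then for every r with e^{2πir} ∈ S, every w ∈ Z_r, and every δ > 0, there exist a rational number ν with e^{2πiν} ∈ S and a point z ∈ Z_ν with |w − z| < δ. -/
open Complex

/-- Preimages of rational-angle points of the unit circle under a nonconstant holomorphic
map are dense in the preimage of the whole unit circle (Lemma 4.4). -/
theorem rational_angle_preimages_dense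
    (Ω : Set ℂ) (hΩ : IsOpen Ω) (hconn : IsConnected Ω)
    (m : ℂ → ℂ) (hm : DifferentiableOn ℂ m Ω) (hnc : ∃ a ∈ Ω, ∃ b ∈ Ω, m a ≠ m b)
    (hS : (Metric.sphere (0 : ℂ) 1 ∩ m '' Ω).Nonempty) :
    ∀ r : ℝ, Complex.exp (2 * Real.pi * I * r) ∈ Metric.sphere (0 : ℂ) 1 ∩ m '' Ω →
      ∀ w ∈ Ω, m w = Complex.exp (2 * Real.pi * I * r) →
        ∀ δ > (0 : ℝ), ∃ ν : ℚ,
          Complex.exp (2 * Real.pi * I * (ν : ℝ)) ∈ Metric.sphere (0 : ℂ) 1 ∩ m '' Ω ∧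
          ∃ z ∈ Ω, m z = Complex.exp (2 * Real.pi * I * (ν : ℝ)) ∧ ‖w - z‖ < δ := by
  intro r hr w hw hmw δ hδ
  have hA : AnalyticOnNhd ℂ m Ω := hm.analyticOnNhd hΩ
  have hopen : ∀ s ⊆ Ω, IsOpen s → IsOpen (m '' s) := by
    rcases hA.is_constant_or_isOpen hconn.isPreconnected with ⟨c, hc⟩ | h
    · obtain ⟨a, ha, b, hb, hab⟩ := hnc
      exact absurd ((hc a ha).trans (hc b hb).symm) hab
    · exact h
  set s : Set ℂ := Metric.ball w δ ∩ Ω with hs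
  have hsO : IsOpen s := Metric.isOpen_ball.inter hΩ
  have himg : IsOpen (m '' s) := hopen s Set.inter_subset_right hsO
  have hwmem : Complex.exp (2 * Real.pi * I * r) ∈ m '' s := by
    exact ⟨w, ⟨Metric.mem_ball_self hδ, hw⟩, hmw⟩
  -- continuity of t ↦ exp(2πi t) at r
  have hcont : Continuous fun t : ℝ => Complex.exp (2 * Real.pi * I * t) := by
    exact Complex.continuous_exp.comp (by continuity)
  have hnhds : (fun t : ℝ => Complex.exp (2 * Real.pi * I * t)) ⁻¹' (m '' s) ∈ nhds r := by
    exact (himg.preimage hcont).mem_nhds hwmem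
  obtain ⟨ε, hε, hball⟩ := Metric.mem_nhds_iff.mp hnhds
  obtain ⟨ν, hν⟩ := exists_rat_near r hε
  have hνmem : Complex.exp (2 * Real.pi * I * (ν : ℝ)) ∈ m '' s := by
    apply hball
    simpa [Real.dist_eq, abs_sub_comm] using hν
  obtain ⟨z, ⟨hzball, hzΩ⟩, hz⟩ := hνmem
  refine ⟨ν, ⟨?_, ⟨z, hzΩ, hz⟩⟩, z, hzΩ, hz, ?_⟩
  · simp [Complex.norm_exp]
  · simpa [Complex.dist_eq, dist_comm] using hzball
end
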